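/- If a positional scoring rule with strictly decreasing scores satisfies independence of unanimous losers, then for every k ≤ m the score vector used for k candidates is linearly equivalent to the first k entries of the score vector used for m candidates. Conversely, if the scores are strictly decreasing and each k-candidate vector is linearly equivalent to the first k entries of the m-candidate vector, the rule satisfies independence of unanimous losers. -/

import Mathlib

/-- Total score of candidate `a`: in race `i`, `P i` sends each candidate to their
(0-indexed) finishing position, which is worth `s` points. -/
def TotalScore {n k : ℕ} (s : Fin k → ℝ) (P : Fin n → Equiv.Perm (Fin k)) (a : Fin k) : ℝ :=
  ∑ i, s (P i a)

/-- Total score of candidate `a` after removal of a unanimous loser (who occupies the last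
position, `k`, of `Fin (k+1)` in every race): the remaining candidates keep their positions,
now scored by the `k`-candidate score vector `s`. -/
def RTotalL {n k : ℕ} (s : Fin k → ℝ) (P : Fin n → Equiv.Perm (Fin (k+1))) (a : Fin (k+1)) : ℝ :=
  ∑ i, if h : (P i a : ℕ) < k then s ⟨(P i a : ℕ), h⟩ else 0

/-- Independence of unanimous losers for a scoring rule `s` (a score vector for each number
of candidates), over at most `m` candidates: in any nonempty profile with a unanimous loser,
the loser is ranked strictly last, and the ranking of the other candidates is the same before
and after the loser's removal. -/
def IndepUnanimousLosers (m : ℕ) (s : ∀ k, Fin k → ℝ) : Prop :=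
  ∀ k, k + 1 ≤ m → ∀ n, 0 < n → ∀ P : Fin n → Equiv.Perm (Fin (k+1)), ∀ c : Fin (k+1),
    (∀ i, (P i c : ℕ) = k) →
    (∀ a, a ≠ c → TotalScore (s (k+1)) P c < TotalScore (s (k+1)) P a) ∧
    (∀ a b, a ≠ c → b ≠ c →
      (TotalScore (s (k+1)) P a ≤ TotalScore (s (k+1)) P b ↔
        RTotalL (s k) P a ≤ RTotalL (s k) P b))


lemma sumIf (p q : ℕ) (A B : ℝ) (hpq : q ≤ p) :
    ∑ i : Fin p, (if (i : ℕ) < q then A else B) = q * A + ((p - q : ℕ) : ℝ) * B := by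
  rw [Fin.sum_univ_eq_sum_range (fun i => if i < q then A else B) p]
  rw [Finset.range_eq_Ico, ← Finset.sum_Ico_consecutive _ (Nat.zero_le q) hpq]
  rw [Finset.sum_congr rfl (fun i hi => if_pos (Finset.mem_Ico.mp hi).2),
      Finset.sum_congr rfl (g := fun _ => B)
        (fun i hi => if_neg (by exact Nat.not_lt.mpr (Finset.mem_Ico.mp hi).1))]
  simp [Nat.card_Ico, mul_comm]


lemma noGap (vj v1 wj w1 : ℝ) (hv1 : v1 < 0) (hw1 : w1 < 0) (hvj : vj ≤ v1) (hwj : wj ≤ w1)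
    (H : ∀ p q : ℕ, 1 ≤ q → q ≤ p → ((q : ℝ) * vj ≤ (p : ℝ) * v1 ↔ (q : ℝ) * wj ≤ (p : ℝ) * w1)) :
    ¬ (vj / v1 < wj / w1) := by
  intro hlt
  obtain ⟨r, hr1, hr2⟩ := exists_rat_btwn hlt
  have hX1 : (1 : ℝ) ≤ vj / v1 := by
    rw [le_div_iff_of_neg hv1]; linarith
  have hr_gt1 : (1 : ℝ) < (r : ℝ) := lt_of_le_of_lt hX1 hr1
  set q : ℕ := r.den with hqdef
  have hq0 : 0 < q := r.pos
  have hqR : (0 : ℝ) < (q : ℝ) := by exact_mod_cast hq0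
  have hnum_pos : 0 < r.num := by
    have : (0 : ℚ) < r := by exact_mod_cast lt_trans zero_lt_one (by exact_mod_cast hr_gt1)
    exact Rat.num_pos.mpr this
  set p : ℕ := r.num.toNat with hpdef
  have hpr : ((p : ℝ)) = (r : ℝ) * q := by
    have h1 : ((r.num : ℝ)) = (r : ℝ) * (r.den : ℝ) := by
      rw [Rat.cast_def]; field_simp
    have h2 : ((p : ℤ) : ℝ) = ((r.num : ℝ)) := by
      rw [hpdef, Int.toNat_of_nonneg (le_of_lt hnum_pos)]
    rw [← hqdef] at h1
    exact_mod_cast h2.trans h1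
  have hqp : q ≤ p := by
    have : (q : ℝ) ≤ (p : ℝ) := by rw [hpr]; nlinarith
    exact_mod_cast this
  rw [lt_div_iff_of_neg hw1] at hr2
  have h2 : (q : ℝ) * wj ≤ (p : ℝ) * w1 := by nlinarith
  rw [div_lt_iff_of_neg hv1] at hr1
  have h3 : (q : ℝ) * vj ≤ (p : ℝ) * v1 := (H p q hq0 hqp).mpr h2
  nlinarith

lemma lemB {k : ℕ} (hk2 : 2 ≤ k) (t u : Fin k → ℝ)
    (ht : ∀ i j : Fin k, i < j → t j < t i) (hu : ∀ i j : Fin k, i < j → u j < u i)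
    (H : ∀ j : Fin k, 2 ≤ (j : ℕ) → ∀ p q : ℕ, 1 ≤ q → q ≤ p →
      ((q : ℝ) * t j + ((p : ℝ) - (q : ℝ)) * t ⟨0, by omega⟩ ≤ (p : ℝ) * t ⟨1, by omega⟩ ↔
       (q : ℝ) * u j + ((p : ℝ) - (q : ℝ)) * u ⟨0, by omega⟩ ≤ (p : ℝ) * u ⟨1, by omega⟩)) :
    ∃ α : ℝ, 0 < α ∧ ∃ β : ℝ, ∀ j : Fin k, u j = α * t j + β := by
  set a0 : Fin k := ⟨0, by omega⟩
  set a1 : Fin k := ⟨1, by omega⟩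
  have h01 : a0 < a1 := by simp [a0, a1, Fin.lt_def]
  have hv1 : t a1 - t a0 < 0 := sub_neg.mpr (ht a0 a1 h01)
  have hw1 : u a1 - u a0 < 0 := sub_neg.mpr (hu a0 a1 h01)
  refine ⟨(u a1 - u a0) / (t a1 - t a0), div_pos_of_neg_of_neg hw1 hv1,
    u a0 - (u a1 - u a0) / (t a1 - t a0) * t a0, ?_⟩
  intro j
  set α := (u a1 - u a0) / (t a1 - t a0) with hα
  have hc : α * (t a1 - t a0) = u a1 - u a0 := div_mul_cancel₀ _ (ne_of_lt hv1)
  rcases Nat.lt_or_ge (j : ℕ) 2 with hj | hj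
  · interval_cases h : (j : ℕ)
    · have : j = a0 := Fin.ext h
      rw [this]; ring
    · have : j = a1 := Fin.ext h
      rw [this]; linear_combination -hc
  · have h1j : a1 < j := by simp only [a1, Fin.lt_def]; omega
    have hvj : t j - t a0 ≤ t a1 - t a0 := by have := ht a1 j h1j; linarith
    have hwj : u j - u a0 ≤ u a1 - u a0 := by have := hu a1 j h1j; linarith
    have Hpq : ∀ p q : ℕ, 1 ≤ q → q ≤ p →
        ((q : ℝ) * (t j - t a0) ≤ (p : ℝ) * (t a1 - t a0) ↔
         (q : ℝ) * (u j - u a0) ≤ (p : ℝ) * (u a1 - u a0)) := by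
      intro p q hq hpq
      constructor
      · intro h; have h' : (q : ℝ) * t j + ((p : ℝ) - q) * t a0 ≤ (p : ℝ) * t a1 := by linarith
        have := (H j hj p q hq hpq).mp h'; linarith
      · intro h; have h' : (q : ℝ) * u j + ((p : ℝ) - q) * u a0 ≤ (p : ℝ) * u a1 := by linarith
        have := (H j hj p q hq hpq).mpr h'; linarith
    have hle1 := noGap _ _ _ _ hv1 hw1 hvj hwj Hpq
    have hle2 := noGap _ _ _ _ hw1 hv1 hwj hvj (fun p q hq hpq => (Hpq p q hq hpq).symm)
    have heq : (t j - t a0) / (t a1 - t a0) = (u j - u a0) / (u a1 - u a0) :=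
      le_antisymm (not_lt.mp hle2) (not_lt.mp hle1)
    rw [div_eq_div_iff (ne_of_lt hv1) (ne_of_lt hw1)] at heq
    have key : u j - u a0 = α * (t j - t a0) := by
      rw [hα, div_mul_eq_mul_div, eq_div_iff (ne_of_lt hv1)]
      linarith [heq]
    linear_combination key

lemma lemA (m : ℕ) (s : ∀ k, Fin k → ℝ) (hI : IndepUnanimousLosers m s)
    {k : ℕ} (hk2 : 2 ≤ k) (hkm : k + 1 ≤ m) (j : Fin k) (hj : 2 ≤ (j : ℕ))
    (p q : ℕ) (hq : 1 ≤ q) (hpq : q ≤ p) :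
    ((q : ℝ) * s (k+1) (Fin.castSucc j) + ((p : ℝ) - (q : ℝ)) * s (k+1) (Fin.castSucc ⟨0, by omega⟩)
        ≤ (p : ℝ) * s (k+1) (Fin.castSucc ⟨1, by omega⟩) ↔
      (q : ℝ) * s k j + ((p : ℝ) - (q : ℝ)) * s k ⟨0, by omega⟩ ≤ (p : ℝ) * s k ⟨1, by omega⟩) := by
  set A0 : Fin (k+1) := ⟨0, by omega⟩
  set B1 : Fin (k+1) := ⟨1, by omega⟩
  set C : Fin (k+1) := ⟨k, by omega⟩
  set J : Fin (k+1) := ⟨(j : ℕ), by omega⟩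
  set P : Fin p → Equiv.Perm (Fin (k+1)) :=
    fun i => if (i : ℕ) < q then Equiv.swap A0 J else Equiv.refl _ with hP
  have hCA : C ≠ A0 := by simp [C, A0, Fin.ext_iff]; omega
  have hCJ : C ≠ J := by simp [C, J, Fin.ext_iff]; omega
  have hBA : B1 ≠ A0 := by simp [B1, A0, Fin.ext_iff]
  have hBJ : B1 ≠ J := by simp [B1, J, Fin.ext_iff]; omega
  have hPA : ∀ i : Fin p, P i A0 = if (i : ℕ) < q then J else A0 := by
    intro i; by_cases h : (i : ℕ) < q <;> simp [hP, h, Equiv.swap_apply_left]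
  have hPB : ∀ i : Fin p, P i B1 = B1 := by
    intro i; by_cases h : (i : ℕ) < q <;>
      simp [hP, h, Equiv.swap_apply_of_ne_of_ne hBA hBJ]
  have hPC : ∀ i : Fin p, (P i C : ℕ) = k := by
    intro i; by_cases h : (i : ℕ) < q <;>
      simp [hP, h, Equiv.swap_apply_of_ne_of_ne hCA hCJ, C]
  obtain ⟨-, h2⟩ := hI k hkm p (by omega) P C hPC
  have key := h2 A0 B1 (hCA.symm) (by simp [B1, C, Fin.ext_iff]; omega)
  have hTa : TotalScore (s (k+1)) P A0 = q * s (k+1) J + ((p - q : ℕ) : ℝ) * s (k+1) A0 := by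
    rw [TotalScore, ← sumIf p q _ _ hpq]
    exact Finset.sum_congr rfl fun i _ => by rw [hPA i]; by_cases h : (i : ℕ) < q <;> simp [h]
  have hTb : TotalScore (s (k+1)) P B1 = p * s (k+1) B1 := by
    rw [TotalScore]
    simp only [hPB]
    rw [Finset.sum_const, Finset.card_univ, Fintype.card_fin, nsmul_eq_mul]
  have hRa : RTotalL (s k) P A0 = q * s k j + ((p - q : ℕ) : ℝ) * s k ⟨0, by omega⟩ := by
    rw [RTotalL, ← sumIf p q _ _ hpq]
    refine Finset.sum_congr rfl fun i _ => ?_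
    rw [hPA i]; by_cases h : (i : ℕ) < q
    · rw [if_pos h, if_pos h, dif_pos (show ((j:ℕ)) < k from j.isLt)]
    · rw [if_neg h, if_neg h, dif_pos (show (0:ℕ) < k by omega)]
  have hRb : RTotalL (s k) P B1 = p * s k ⟨1, by omega⟩ := by
    have hconst : RTotalL (s k) P B1 = ∑ _i : Fin p, s k ⟨1, by omega⟩ := by
      rw [RTotalL]
      refine Finset.sum_congr rfl fun i _ => ?_
      rw [hPB i, dif_pos (show (1:ℕ) < k by omega)]
    rw [hconst, Finset.sum_const, Finset.card_univ, Fintype.card_fin, nsmul_eq_mul]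
  rw [hTa, hTb, hRa, hRb, Nat.cast_sub hpq] at key
  have e1 : Fin.castSucc j = J := by simp [J, Fin.ext_iff]
  have e2 : Fin.castSucc (⟨0, by omega⟩ : Fin k) = A0 := by simp [A0, Fin.ext_iff]
  have e3 : Fin.castSucc (⟨1, by omega⟩ : Fin k) = B1 := by simp [B1, Fin.ext_iff]
  rw [e1, e2, e3]
  exact key

/-- A scoring rule with strictly decreasing scores satisfies independence of unanimous losers
iff, for every `k ≤ m`, the `k`-candidate scores are linearly equivalent to the first `k`
entries of the `m`-candidate scores. -/
theorem stmt1 (m : ℕ) (s : ∀ k, Fin k → ℝ)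
    (hdec : ∀ k, k ≤ m → ∀ i j : Fin k, i < j → s k j < s k i) :
    IndepUnanimousLosers m s ↔
      ∀ k, ∀ hk : k ≤ m, ∃ α : ℝ, 0 < α ∧ ∃ β : ℝ,
        ∀ j : Fin k, s k j = α * s m (Fin.castLE hk j) + β := by

  constructor
  · -- forward
    intro hI
    have main : ∀ d k : ℕ, ∀ _hkm : k + d = m, ∃ α : ℝ, 0 < α ∧ ∃ β : ℝ,
        ∀ j : Fin k, s k j = α * s m (Fin.castLE (by omega) j) + β := by
      intro d
      induction d with
      | zero =>
        intro k hkm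
        have hm : m = k := by omega
        subst hm
        exact ⟨1, one_pos, 0, fun j => by
          have h' : ∀ x : ℝ, x = 1 * x + 0 := fun x => by ring
          exact h' _⟩
      | succ d ih =>
        intro k hkm
        have hk1m : (k + 1) ≤ m := by omega
        obtain ⟨α', hα', β', hβ'⟩ := ih (k+1) (by omega)
        rcases Nat.lt_or_ge k 2 with hk2 | hk2
        · interval_cases k
          · exact ⟨1, one_pos, 0, fun j => j.elim0⟩
          · refine ⟨1, one_pos, s 1 ⟨0, one_pos⟩ - s m (Fin.castLE (by omega) ⟨0, one_pos⟩),
              fun j => ?_⟩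
            have hj : j = ⟨0, one_pos⟩ := Fin.ext (Nat.lt_one_iff.mp j.isLt)
            rw [hj]; ring
        · have ht : ∀ i j : Fin k, i < j →
              s (k+1) (Fin.castSucc j) < s (k+1) (Fin.castSucc i) := by
            intro i j hij
            exact hdec (k+1) hk1m _ _ (Fin.castSucc_lt_castSucc_iff.mpr hij)
          have hu : ∀ i j : Fin k, i < j → s k j < s k i := hdec k (by omega)
          obtain ⟨α, hα, β, hβ⟩ := lemB hk2 (fun x => s (k+1) (Fin.castSucc x)) (s k) ht hu
            (fun j hj p q hq hpq => lemA m s hI hk2 hk1m j hj p q hq hpq)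
          refine ⟨α * α', mul_pos hα hα', α * β' + β, fun j => ?_⟩
          have e : Fin.castLE (by omega : k + 1 ≤ m) (Fin.castSucc j)
              = Fin.castLE (by omega : k ≤ m) j := rfl
          rw [hβ j, hβ' (Fin.castSucc j), e]; ring
    intro k hk
    obtain ⟨α, hα, β, hβ⟩ := main (m - k) k (by omega)
    exact ⟨α, hα, β, fun j => hβ j⟩
  · -- backward
    intro h k hk1 n hn P c hc
    have hmem : Nonempty (Fin n) := ⟨⟨0, hn⟩⟩
    obtain ⟨α₁, hα₁, β₁, h₁⟩ := h (k+1) hk1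
    obtain ⟨α₂, hα₂, β₂, h₂⟩ := h k (by omega)
    have hxlt : ∀ x : Fin (k+1), x ≠ c → ∀ i, ((P i x : ℕ)) < k := by
      intro x hx i
      have hne : P i x ≠ P i c := fun e => hx ((P i).injective e)
      have hne' : ((P i x : ℕ)) ≠ ((P i c : ℕ)) := fun e => hne (Fin.ext e)
      have := hc i
      have := (P i x).isLt
      omega
    constructor
    · intro a ha
      apply Finset.sum_lt_sum_of_nonempty Finset.univ_nonempty
      intro i _
      apply hdec (k+1) hk1
      rw [Fin.lt_def, hc i]
      exact hxlt a ha i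
    · intro a b ha hb
      set F : Fin (k+1) → ℝ := fun x => ∑ i : Fin n, s m (Fin.castLE hk1 (P i x)) with hF
      have hT : ∀ x : Fin (k+1), TotalScore (s (k+1)) P x = α₁ * F x + n * β₁ := by
        intro x
        rw [TotalScore, hF]
        rw [Finset.sum_congr rfl (fun i _ => h₁ (P i x)), Finset.sum_add_distrib,
          Finset.sum_const, Finset.card_univ, Fintype.card_fin, nsmul_eq_mul,
          Finset.mul_sum]
      have hR : ∀ x : Fin (k+1), x ≠ c → RTotalL (s k) P x = α₂ * F x + n * β₂ := by
        intro x hx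
        rw [RTotalL, hF]
        have : ∀ i : Fin n, (if h : ((P i x : ℕ)) < k then s k ⟨(P i x : ℕ), h⟩ else 0)
            = α₂ * s m (Fin.castLE hk1 (P i x)) + β₂ := by
          intro i
          rw [dif_pos (hxlt x hx i), h₂ ⟨(P i x : ℕ), hxlt x hx i⟩]
          rfl
        rw [Finset.sum_congr rfl (fun i _ => this i), Finset.sum_add_distrib,
          Finset.sum_const, Finset.card_univ, Fintype.card_fin, nsmul_eq_mul,
          Finset.mul_sum]
      rw [hT a, hT b, hR a ha, hR b hb, add_le_add_iff_right, add_le_add_iff_right,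
        mul_le_mul_iff_right₀ hα₁, mul_le_mul_iff_right₀ hα₂]
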